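/- Cone containment for ℓp-halfspaces: for any p ∈ [1,∞) ∪ {∞}, any x ∈ ℝ^d, and any unit vector v, every z ∈ ℝ^d with z ≠ x whose direction satisfies angle(z - x, v) ≤ 1/√d is contained in the limit ℓp-halfspace H^p_{x,v}; conversely, every z ∈ H^p_{x,v} with z ≠ x satisfies angle(z - x, v) ≤ π - 1/√d. -/

import Mathlib

open scoped ENNReal

noncomputable def pnorm {d : ℕ} (p : ℝ≥0∞) [Fact (1 ≤ p)] (x : Fin d → ℝ) : ℝ :=
  ‖(WithLp.equiv p (Fin d → ℝ)).symm x‖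

def Hp {d : ℕ} (p : ℝ≥0∞) [Fact (1 ≤ p)] (x v : Fin d → ℝ) : Set (Fin d → ℝ) :=
  {z | ∀ ε : ℝ, 0 < ε → pnorm p (x - z) ≤ pnorm p (x - ε • v - z)}

noncomputable def pangle {d : ℕ} (a b : Fin d → ℝ) : ℝ :=
  Real.arccos ((∑ i, a i * b i) / (pnorm 2 a * pnorm 2 b))

open InnerProductGeometry RealInnerProductSpace Finset



section tri
variable {V : Type*} [NormedAddCommGroup V] [InnerProductSpace ℝ V]

lemma my_inner_ge (x y z : V) (hy : y ≠ 0) :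
    ‖x‖ * ‖z‖ * Real.cos (angle x y + angle y z) ≤ ⟪x, z⟫ := by
  have hny : (0:ℝ) < ‖y‖ := norm_pos_iff.2 hy
  have hy2 : (0:ℝ) < ⟪y, y⟫ := by
    rw [real_inner_self_eq_norm_mul_norm]; positivity
  set a : ℝ := ⟪x, y⟫ / ⟪y, y⟫ with ha
  set b : ℝ := ⟪z, y⟫ / ⟪y, y⟫ with hb
  set x' := x - a • y with hx'
  set z' := z - b • y with hz'
  have exz : ⟪x', z'⟫ = ⟪x, z⟫ - a * ⟪y, z⟫ - b * ⟪x, y⟫ + a * b * ⟪y, y⟫ := by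
    simp only [hx', hz', inner_sub_left, inner_sub_right, real_inner_smul_left,
      real_inner_smul_right]
    ring
  have hyz : ⟪z, y⟫ = ⟪y, z⟫ := real_inner_comm y z
  have hxy' : ⟪y, x⟫ = ⟪x, y⟫ := real_inner_comm x y
  have edec : ⟪x, z⟫ = ⟪x', z'⟫ + ⟪x, y⟫ * ⟪y, z⟫ / ⟪y, y⟫ := by
    rw [exz, ha, hb]; field_simp; ring
  have exx : ⟪x', x'⟫ * ⟪y, y⟫ = ⟪x, x⟫ * ⟪y, y⟫ - ⟪x, y⟫ * ⟪x, y⟫ := by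
    simp only [hx', inner_sub_left, inner_sub_right, real_inner_smul_left,
      real_inner_smul_right, ha, hxy']
    field_simp; ring
  have ezz : ⟪z', z'⟫ * ⟪y, y⟫ = ⟪y, y⟫ * ⟪z, z⟫ - ⟪y, z⟫ * ⟪y, z⟫ := by
    simp only [hz', inner_sub_left, inner_sub_right, real_inner_smul_left,
      real_inner_smul_right, hb, hyz, real_inner_comm y z]
    field_simp; ring
  have sqx : Real.sqrt (⟪x', x'⟫ * ⟪y, y⟫) = ‖x'‖ * ‖y‖ := by
    rw [real_inner_self_eq_norm_mul_norm, real_inner_self_eq_norm_mul_norm,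
      show ‖x'‖ * ‖x'‖ * (‖y‖ * ‖y‖) = (‖x'‖ * ‖y‖) * (‖x'‖ * ‖y‖) by ring,
      Real.sqrt_mul_self (by positivity)]
  have sqz : Real.sqrt (⟪z', z'⟫ * ⟪y, y⟫) = ‖z'‖ * ‖y‖ := by
    rw [real_inner_self_eq_norm_mul_norm, real_inner_self_eq_norm_mul_norm,
      show ‖z'‖ * ‖z'‖ * (‖y‖ * ‖y‖) = (‖z'‖ * ‖y‖) * (‖z'‖ * ‖y‖) by ring,
      Real.sqrt_mul_self (by positivity)]
  have nx' : ‖x'‖ * ‖y‖ = Real.sin (angle x y) * (‖x‖ * ‖y‖) := by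
    rw [← sqx, exx, sin_angle_mul_norm_mul_norm]
  have nz' : ‖z'‖ * ‖y‖ = Real.sin (angle y z) * (‖y‖ * ‖z‖) := by
    rw [← sqz, ezz, sin_angle_mul_norm_mul_norm]
  have nz'2 : ‖z'‖ = Real.sin (angle y z) * ‖z‖ := by
    have := nz'
    have h2 : ‖z'‖ * ‖y‖ = Real.sin (angle y z) * ‖z‖ * ‖y‖ := by rw [this]; ring
    exact mul_right_cancel₀ (ne_of_gt hny) h2
  have nx'3 : ‖x'‖ = Real.sin (angle x y) * ‖x‖ := by
    have h2 : ‖x'‖ * ‖y‖ = Real.sin (angle x y) * ‖x‖ * ‖y‖ := by rw [nx']; ring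
    exact mul_right_cancel₀ (ne_of_gt hny) h2
  have cs : -(‖x'‖ * ‖z'‖) ≤ ⟪x', z'⟫ :=
    neg_abs_le _ |>.trans' (by
      have := abs_real_inner_le_norm x' z'
      linarith [neg_le_neg this])
  have ecos1 : ⟪x, y⟫ = Real.cos (angle x y) * (‖x‖ * ‖y‖) :=
    (cos_angle_mul_norm_mul_norm x y).symm
  have ecos2 : ⟪y, z⟫ = Real.cos (angle y z) * (‖y‖ * ‖z‖) :=
    (cos_angle_mul_norm_mul_norm y z).symm
  have emid : ⟪x, y⟫ * ⟪y, z⟫ / ⟪y, y⟫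
      = Real.cos (angle x y) * Real.cos (angle y z) * (‖x‖ * ‖z‖) := by
    rw [ecos1, ecos2, real_inner_self_eq_norm_mul_norm]
    field_simp
  rw [Real.cos_add, edec, emid]
  have : -(‖x'‖ * ‖z'‖) = -(Real.sin (angle x y) * Real.sin (angle y z) * (‖x‖ * ‖z‖)) := by
    rw [nx'3, nz'2]; ring
  nlinarith [cs, this]

lemma my_angle_triangle (x y z : V) (hx : x ≠ 0) (hy : y ≠ 0) (hz : z ≠ 0) :
    angle x z ≤ angle x y + angle y z := by
  rcases le_or_gt Real.pi (angle x y + angle y z) with h | h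
  · exact (angle_le_pi x z).trans h
  have hsum0 : 0 ≤ angle x y + angle y z :=
    add_nonneg (angle_nonneg _ _) (angle_nonneg _ _)
  have hxz : (0:ℝ) < ‖x‖ * ‖z‖ :=
    mul_pos (norm_pos_iff.2 hx) (norm_pos_iff.2 hz)
  have key := my_inner_ge x y z hy
  have hcos : Real.cos (angle x y + angle y z) ≤ ⟪x, z⟫ / (‖x‖ * ‖z‖) := by
    rw [le_div_iff₀ hxz]; linarith [key]
  calc angle x z = Real.arccos (⟪x, z⟫ / (‖x‖ * ‖z‖)) := rfl
    _ ≤ Real.arccos (Real.cos (angle x y + angle y z)) := by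
        unfold Real.arccos
        have := Real.monotone_arcsin hcos
        linarith
    _ = angle x y + angle y z := Real.arccos_cos hsum0 h.le

lemma inner_pos_of_angle_lt (x y : V) (hx : x ≠ 0) (hy : y ≠ 0)
    (h : angle x y < Real.pi / 2) : 0 < ⟪x, y⟫ := by
  have hc : 0 < Real.cos (angle x y) :=
    Real.cos_pos_of_mem_Ioo ⟨lt_of_lt_of_le (by simp [Real.pi_pos.le]; positivity) (angle_nonneg x y), h⟩
  have := cos_angle_mul_norm_mul_norm x y
  have hxy : (0:ℝ) < ‖x‖ * ‖y‖ :=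
    mul_pos (norm_pos_iff.2 hx) (norm_pos_iff.2 hy)
  nlinarith

end tri





variable {d : ℕ}

lemma pnorm_eq_sum {p : ℝ≥0∞} [Fact (1 ≤ p)] (hp : p ≠ ∞) (a : Fin d → ℝ) :
    pnorm p a = (∑ i, |a i| ^ p.toReal) ^ (1 / p.toReal) := by
  have h1 : (1:ℝ≥0∞) ≤ p := Fact.out
  have hpt : 0 < p.toReal :=
    ENNReal.toReal_pos (lt_of_lt_of_le one_pos h1).ne' hp
  rw [pnorm, PiLp.norm_eq_sum hpt]
  simp [Real.norm_eq_abs]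

lemma pnorm_top_eq {p : ℝ≥0∞} [Fact (1 ≤ p)] (hp : p = ∞) (a : Fin d → ℝ) :
    pnorm p a = ⨆ i, |a i| := by
  subst hp
  rw [pnorm, PiLp.norm_eq_ciSup]
  simp [Real.norm_eq_abs]

lemma pnorm_two_sqrt (a : Fin d → ℝ) : pnorm 2 a = Real.sqrt (∑ i, a i ^ 2) := by
  rw [pnorm, EuclideanSpace.norm_eq]
  simp [sq_abs]

lemma sign_mul_self' (t : ℝ) : Real.sign t * t = |t| := by
  rcases lt_trichotomy t 0 with h | h | h
  · rw [Real.sign_of_neg h, abs_of_neg h]; ring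
  · simp [h]
  · rw [Real.sign_of_pos h, abs_of_pos h]; ring

lemma abs_sign_le (t : ℝ) : |Real.sign t| ≤ 1 := by
  rcases Real.sign_apply_eq t with h | h | h <;> simp [h]

lemma sign_sq_of_ne (t : ℝ) (h : t ≠ 0) : Real.sign t ^ 2 = 1 := by
  rcases Real.sign_apply_eq_of_ne_zero t h with h' | h' <;> simp [h']

lemma rpow_two_eq (t : ℝ) : t ^ 2 = |t| ^ (2:ℝ) := by
  rw [← sq_abs, ← Real.rpow_natCast |t| 2]; norm_num

set_option maxHeartbeats 1000000 in
lemma exists_dual (p : ℝ≥0∞) [Fact (1 ≤ p)] {w : Fin d → ℝ} (hw : w ≠ 0) :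
    ∃ g : Fin d → ℝ,
      (∑ i, g i * w i = pnorm p w) ∧
      (∀ a : Fin d → ℝ, ∑ i, g i * a i ≤ pnorm p a) ∧
      pnorm 2 g * pnorm 2 w ≤ Real.sqrt d * pnorm p w := by
  obtain ⟨j, hj⟩ : ∃ j, w j ≠ 0 := by
    by_contra h; push_neg at h; exact hw (funext h)
  have hne : (Finset.univ : Finset (Fin d)).Nonempty := ⟨j, Finset.mem_univ j⟩
  obtain ⟨i₀, -, hi₀⟩ := Finset.exists_max_image Finset.univ (fun i => |w i|) hne
  have hi₀' : ∀ i, |w i| ≤ |w i₀| := fun i => hi₀ i (Finset.mem_univ i)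
  set M := |w i₀| with hM
  have hMpos : 0 < M := lt_of_lt_of_le (abs_pos.2 hj) (hi₀' j)
  have hw0 : w i₀ ≠ 0 := fun h => by simp [hM, h] at hMpos
  haveI : Nonempty (Fin d) := ⟨j⟩
  rcases eq_or_ne p ∞ with hp | hp
  · -- p = ∞
    refine ⟨fun i => if i = i₀ then Real.sign (w i₀) else 0, ?_, ?_, ?_⟩
    · rw [pnorm_top_eq hp]
      have : ∑ i, (if i = i₀ then Real.sign (w i₀) else 0) * w i
          = Real.sign (w i₀) * w i₀ := by
        rw [Finset.sum_eq_single i₀]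
        · simp
        · intro b _ hb; simp [hb]
        · simp
      rw [this, sign_mul_self']
      exact le_antisymm (le_ciSup (f := fun i => |w i|) (Set.Finite.bddAbove (Set.finite_range _)) i₀)
        (ciSup_le hi₀')
    · intro a
      have h1 : ∑ i, (if i = i₀ then Real.sign (w i₀) else 0) * a i
          = Real.sign (w i₀) * a i₀ := by
        rw [Finset.sum_eq_single i₀]
        · simp
        · intro b _ hb; simp [hb]
        · simp
      rw [h1, pnorm_top_eq hp]
      calc Real.sign (w i₀) * a i₀ ≤ |Real.sign (w i₀) * a i₀| := le_abs_self _
        _ ≤ |a i₀| := by rw [abs_mul]; nlinarith [abs_sign_le (w i₀), abs_nonneg (a i₀)]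
        _ ≤ ⨆ i, |a i| := le_ciSup (f := fun i => |a i|) (Set.Finite.bddAbove (Set.finite_range _)) i₀
    · rw [pnorm_top_eq hp]
      have hg2 : pnorm 2 (fun i => if i = i₀ then Real.sign (w i₀) else 0) = 1 := by
        rw [pnorm_two_sqrt]
        have : ∑ i, (if i = i₀ then Real.sign (w i₀) else 0) ^ 2 = 1 := by
          rw [Finset.sum_eq_single i₀]
          · simp [sign_sq_of_ne _ hw0]
          · intro b _ hb; simp [hb]
          · simp
        rw [this, Real.sqrt_one]
      rw [hg2, one_mul, pnorm_two_sqrt]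
      have hsup : (⨆ i, |w i|) = M := le_antisymm (ciSup_le hi₀')
        (le_ciSup (f := fun i => |w i|) (Set.Finite.bddAbove (Set.finite_range _)) i₀)
      rw [hsup]
      have hsum : ∑ i, w i ^ 2 ≤ (d : ℝ) * M ^ 2 := by
        calc ∑ i, w i ^ 2 ≤ ∑ _i : Fin d, M ^ 2 := by
              refine Finset.sum_le_sum fun i _ => ?_
              rw [← sq_abs]; exact pow_le_pow_left₀ (abs_nonneg _) (hi₀' i) 2
          _ = (d : ℝ) * M ^ 2 := by simp [mul_comm]
      calc Real.sqrt (∑ i, w i ^ 2) ≤ Real.sqrt ((d : ℝ) * M ^ 2) :=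
            Real.sqrt_le_sqrt hsum
        _ = Real.sqrt d * M := by
            rw [Real.sqrt_mul (by positivity), Real.sqrt_sq hMpos.le]
  · -- p ≠ ∞ : real exponent r
    set r := p.toReal with hrdef
    have hr1 : 1 ≤ r := by
      have h1 : (1:ℝ≥0∞) ≤ p := Fact.out
      simpa using ENNReal.toReal_mono hp h1
    have hr0 : 0 < r := lt_of_lt_of_le one_pos hr1
    set S := ∑ i, |w i| ^ r with hSdef
    have hS : 0 < S := by
      refine Finset.sum_pos' (fun i _ => Real.rpow_nonneg (abs_nonneg _) _)
        ⟨j, Finset.mem_univ j, Real.rpow_pos_of_pos (abs_pos.2 hj) _⟩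
    have hNw : pnorm p w = S ^ (1/r) := pnorm_eq_sum hp w
    set c := S ^ ((r-1)/r) with hcdef
    have hc : 0 < c := Real.rpow_pos_of_pos hS _
    have hSc : S / c = S ^ (1/r) := by
      rw [hcdef]
      nth_rewrite 1 [← Real.rpow_one S]
      rw [← Real.rpow_sub hS]
      congr 1
      field_simp; ring
    set G := fun i => Real.sign (w i) * |w i| ^ (r-1) with hGdef
    have hGw : ∀ i, G i * w i = |w i| ^ r := by
      intro i
      rcases eq_or_ne (w i) 0 with h | h
      · simp [hGdef, h, Real.sign_zero, Real.zero_rpow hr0.ne']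
      · have habs : (0:ℝ) < |w i| := abs_pos.2 h
        have e2 : G i * w i = |w i| ^ (r-1) * (Real.sign (w i) * w i) := by
          simp only [hGdef]; ring
        rw [e2, sign_mul_self', ← Real.rpow_add_one habs.ne' (r-1), sub_add_cancel]
    have hsumGw : ∑ i, G i * w i = S := Finset.sum_congr rfl (fun i _ => hGw i)
    have hG20 : ∀ i, w i = 0 → G i = 0 := fun i h => by
      simp [hGdef, h, Real.sign_zero]
    refine ⟨fun i => G i / c, ?_, ?_, ?_⟩
    · have : ∑ i, G i / c * w i = (∑ i, G i * w i) / c := by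
        rw [Finset.sum_div]
        exact Finset.sum_congr rfl (fun i _ => by ring)
      rw [this, hsumGw, hSc, hNw]
    · intro a
      rw [pnorm_eq_sum hp a]
      rcases eq_or_lt_of_le hr1 with hre | hrlt
      · -- r = 1
        have hre' : r = 1 := hre.symm
        have hc1 : c = 1 := by rw [hcdef, hre']; norm_num
        have hGs : ∀ i, G i = Real.sign (w i) := by
          intro i; rw [hGdef]; simp [hre']
        have hb : ∀ i, G i / c * a i ≤ |a i| := by
          intro i
          rw [hc1, div_one, hGs i]
          calc Real.sign (w i) * a i ≤ |Real.sign (w i) * a i| := le_abs_self _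
            _ ≤ |a i| := by
                rw [abs_mul]
                nlinarith [abs_sign_le (w i), abs_nonneg (a i)]
        calc ∑ i, G i / c * a i ≤ ∑ i, |a i| := Finset.sum_le_sum fun i _ => hb i
          _ = (∑ i, |a i| ^ r) ^ (1/r) := by rw [hre']; simp
      · -- 1 < r
        have hpq : (r/(r-1)).HolderConjugate r :=
          (Real.HolderConjugate.conjExponent hrlt).symm
        have hr1ne : r - 1 ≠ 0 := ne_of_gt (by linarith)
        have hold := Real.inner_le_Lp_mul_Lq Finset.univ (fun i => G i / c) a hpq
        have habsGq : ∀ i, |G i| ^ (r/(r-1)) = |w i| ^ r := by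
          intro i
          rcases eq_or_ne (w i) 0 with h | h
          · rw [hG20 i h]
            simp [h, Real.zero_rpow hr0.ne',
              Real.zero_rpow hpq.ne_zero]
          · have habs : (0:ℝ) < |w i| := abs_pos.2 h
            have hsg : |Real.sign (w i)| = 1 := by
              rcases Real.sign_apply_eq_of_ne_zero (w i) h with h' | h' <;> simp [h']
            rw [hGdef]
            simp only []
            rw [abs_mul, hsg, one_mul, abs_of_nonneg (Real.rpow_nonneg (abs_nonneg _) _),
              ← Real.rpow_mul (abs_nonneg _)]
            congr 1
            field_simp
        have hcq : c ^ (r/(r-1)) = S := by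
          rw [hcdef, ← Real.rpow_mul hS.le]
          rw [show (r-1)/r * (r/(r-1)) = 1 by field_simp]
          exact Real.rpow_one S
        have hsumq : ∑ i, |G i / c| ^ (r/(r-1)) = 1 := by
          have : ∀ i, |G i / c| ^ (r/(r-1)) = |G i| ^ (r/(r-1)) / S := by
            intro i
            rw [abs_div, abs_of_pos hc, Real.div_rpow (abs_nonneg _) hc.le, hcq]
          rw [Finset.sum_congr rfl (fun i _ => this i), ← Finset.sum_div,
            Finset.sum_congr rfl (fun i _ => habsGq i), ← hSdef, div_self hS.ne']
        rw [hsumq, Real.one_rpow, one_mul] at hold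
        exact hold
    · -- the ℓ2 bound
      rw [pnorm_two_sqrt, pnorm_two_sqrt, hNw]
      set T := ∑ i, G i ^ 2 with hTdef
      set U := ∑ i, w i ^ 2 with hUdef
      have hT0 : 0 ≤ T := Finset.sum_nonneg fun i _ => sq_nonneg _
      have hU0 : 0 ≤ U := Finset.sum_nonneg fun i _ => sq_nonneg _
      have hG2 : ∀ i, w i ≠ 0 → G i ^ 2 = |w i| ^ (2*r-2) := by
        intro i h
        rw [hGdef]
        simp only []
        rw [mul_pow, sign_sq_of_ne _ h, one_mul,
          ← Real.rpow_natCast (|w i| ^ (r-1)) 2, ← Real.rpow_mul (abs_nonneg _)]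
        congr 1
        push_cast
        ring
      have hMrS : M ^ r ≤ S :=
        Finset.single_le_sum (fun i _ => Real.rpow_nonneg (abs_nonneg _) _)
          (Finset.mem_univ i₀)
      have main : T * U ≤ (d : ℝ) * S ^ 2 := by
        have hMrpos : ∀ t : ℝ, (0:ℝ) < M ^ t := fun t => Real.rpow_pos_of_pos hMpos t
        rcases le_total r 2 with h2 | h2
        · -- r ≤ 2
          have hT : T ≤ (d:ℝ) * M ^ (2*r-2) := by
            have hb : ∀ i, G i ^ 2 ≤ M ^ (2*r-2) := by
              intro i
              rcases eq_or_ne (w i) 0 with h | h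
              · rw [hG20 i h]; simpa using (hMrpos (2*r-2)).le
              · rw [hG2 i h]
                exact Real.rpow_le_rpow (abs_nonneg _) (hi₀' i) (by linarith)
            calc T ≤ ∑ _i : Fin d, M ^ (2*r-2) := Finset.sum_le_sum fun i _ => hb i
              _ = (d:ℝ) * M ^ (2*r-2) := by simp [mul_comm]
          have hU : U ≤ M ^ (2-r) * S := by
            have hb : ∀ i, w i ^ 2 ≤ M ^ (2-r) * |w i| ^ r := by
              intro i
              rcases eq_or_ne (w i) 0 with h | h
              · simp [h, Real.zero_rpow hr0.ne']
              · have habs : (0:ℝ) < |w i| := abs_pos.2 h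
                have esplit : |w i| ^ (2:ℝ) = |w i| ^ (2-r) * |w i| ^ r := by
                  rw [← Real.rpow_add habs]; norm_num
                rw [rpow_two_eq (w i), esplit]
                exact mul_le_mul_of_nonneg_right
                  (Real.rpow_le_rpow (abs_nonneg _) (hi₀' i) (by linarith))
                  (Real.rpow_nonneg (abs_nonneg _) _)
            calc U ≤ ∑ i, M ^ (2-r) * |w i| ^ r := Finset.sum_le_sum fun i _ => hb i
              _ = M ^ (2-r) * S := by rw [← Finset.mul_sum]
          have hMM : M ^ (2*r-2) * M ^ (2-r) = M ^ r := by
            rw [← Real.rpow_add hMpos]; congr 1; ring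
          calc T * U ≤ ((d:ℝ) * M ^ (2*r-2)) * (M ^ (2-r) * S) := by
                apply mul_le_mul hT hU hU0
                positivity
            _ = (d:ℝ) * (M ^ (2*r-2) * M ^ (2-r)) * S := by ring
            _ = (d:ℝ) * M ^ r * S := by rw [hMM]
            _ ≤ (d:ℝ) * S * S := mul_le_mul_of_nonneg_right (mul_le_mul_of_nonneg_left hMrS (Nat.cast_nonneg d)) hS.le
            _ = (d:ℝ) * S ^ 2 := by ring
        · -- 2 ≤ r
          have hT : T ≤ M ^ (r-2) * S := by
            have hb : ∀ i, G i ^ 2 ≤ M ^ (r-2) * |w i| ^ r := by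
              intro i
              rcases eq_or_ne (w i) 0 with h | h
              · rw [hG20 i h]; simp [h, Real.zero_rpow hr0.ne']
              · have habs : (0:ℝ) < |w i| := abs_pos.2 h
                have esplit : |w i| ^ (2*r-2) = |w i| ^ (r-2) * |w i| ^ r := by
                  rw [← Real.rpow_add habs]; congr 1; ring
                rw [hG2 i h, esplit]
                exact mul_le_mul_of_nonneg_right
                  (Real.rpow_le_rpow (abs_nonneg _) (hi₀' i) (by linarith))
                  (Real.rpow_nonneg (abs_nonneg _) _)
            calc T ≤ ∑ i, M ^ (r-2) * |w i| ^ r := Finset.sum_le_sum fun i _ => hb i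
              _ = M ^ (r-2) * S := by rw [← Finset.mul_sum]
          have hU : U ≤ (d:ℝ) * M ^ (2:ℝ) := by
            have hb : ∀ i, w i ^ 2 ≤ M ^ (2:ℝ) := by
              intro i
              rw [rpow_two_eq (w i)]
              exact Real.rpow_le_rpow (abs_nonneg _) (hi₀' i) (by norm_num)
            calc U ≤ ∑ _i : Fin d, M ^ (2:ℝ) := Finset.sum_le_sum fun i _ => hb i
              _ = (d:ℝ) * M ^ (2:ℝ) := by simp [mul_comm]
          have hMM : M ^ (r-2) * M ^ (2:ℝ) = M ^ r := by
            rw [← Real.rpow_add hMpos]; congr 1; ring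
          calc T * U ≤ (M ^ (r-2) * S) * ((d:ℝ) * M ^ (2:ℝ)) := by
                apply mul_le_mul hT hU hU0
                positivity
            _ = (d:ℝ) * (M ^ (r-2) * M ^ (2:ℝ)) * S := by ring
            _ = (d:ℝ) * M ^ r * S := by rw [hMM]
            _ ≤ (d:ℝ) * S * S := mul_le_mul_of_nonneg_right (mul_le_mul_of_nonneg_left hMrS (Nat.cast_nonneg d)) hS.le
            _ = (d:ℝ) * S ^ 2 := by ring
      have hsumg : ∑ i, (G i / c) ^ 2 = T / c ^ 2 := by
        rw [Finset.sum_div]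
        exact Finset.sum_congr rfl fun i _ => by rw [div_pow]
      rw [hsumg]
      have e1 : Real.sqrt (T / c ^ 2) * Real.sqrt U = Real.sqrt (T / c ^ 2 * U) :=
        (Real.sqrt_mul (by positivity) _).symm
      rw [e1]
      have e2 : T / c ^ 2 * U ≤ (d:ℝ) * (S / c) ^ 2 := by
        rw [div_pow, div_mul_eq_mul_div]
        calc T * U / c ^ 2 ≤ ((d:ℝ) * S ^ 2) / c ^ 2 :=
              (div_le_div_iff_of_pos_right (by positivity)).2 main
          _ = (d:ℝ) * (S ^ 2 / c ^ 2) := by ring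
      calc Real.sqrt (T / c ^ 2 * U) ≤ Real.sqrt ((d:ℝ) * (S / c) ^ 2) :=
            Real.sqrt_le_sqrt e2
        _ = Real.sqrt d * (S / c) := by
            rw [Real.sqrt_mul (Nat.cast_nonneg d), Real.sqrt_sq (div_nonneg hS.le hc.le)]
        _ = Real.sqrt d * S ^ (1/r) := by rw [hSc]





variable {d : ℕ}

noncomputable def toE (a : Fin d → ℝ) : EuclideanSpace ℝ (Fin d) :=
  (WithLp.equiv 2 (Fin d → ℝ)).symm a

lemma pnorm_two_toE (a : Fin d → ℝ) : pnorm 2 a = ‖toE a‖ := rfl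

lemma inner_toE (a b : Fin d → ℝ) : ⟪toE a, toE b⟫ = ∑ i, a i * b i := by
  simp [toE, PiLp.inner_apply, RCLike.inner_apply, mul_comm]

lemma pangle_eq_angle (a b : Fin d → ℝ) : pangle a b = angle (toE a) (toE b) := by
  rw [pangle, angle, inner_toE, pnorm_two_toE, pnorm_two_toE]

lemma toE_ne_zero {a : Fin d → ℝ} (h : a ≠ 0) : toE a ≠ 0 := by
  intro h0
  apply h
  have := congrArg (WithLp.equiv 2 (Fin d → ℝ)) h0
  simpa [toE] using this

lemma toE_add (a b : Fin d → ℝ) : toE (a + b) = toE a + toE b := rfl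
lemma toE_smul (c : ℝ) (a : Fin d → ℝ) : toE (c • a) = c • toE a := rfl

lemma pnorm_neg (p : ℝ≥0∞) [Fact (1 ≤ p)] (a : Fin d → ℝ) :
    pnorm p (-a) = pnorm p a := by
  rw [pnorm, pnorm]
  exact norm_neg ((WithLp.equiv p (Fin d → ℝ)).symm a)


lemma pnorm_pos (p : ℝ≥0∞) [Fact (1 ≤ p)] {a : Fin d → ℝ} (ha : a ≠ 0) :
    0 < pnorm p a := by
  rw [pnorm]
  rw [norm_pos_iff]
  intro h0
  apply ha
  have := congrArg (WithLp.equiv p (Fin d → ℝ)) h0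
  simpa using this

lemma dual_angle (p : ℝ≥0∞) [Fact (1 ≤ p)] {w : Fin d → ℝ} (hw : w ≠ 0) :
    ∃ g : Fin d → ℝ, g ≠ 0 ∧
      (∑ i, g i * w i = pnorm p w) ∧
      (∀ a : Fin d → ℝ, ∑ i, g i * a i ≤ pnorm p a) ∧
      angle (toE g) (toE w) < Real.pi/2 - 1/Real.sqrt d := by
  have hd0 : 0 < d := by
    rcases Nat.eq_zero_or_pos d with h | h
    · subst h; exact absurd (Subsingleton.elim w 0) hw
    · exact h
  have hd : (0:ℝ) < Real.sqrt d := Real.sqrt_pos.2 (by exact_mod_cast hd0)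
  have hd1 : 1 ≤ Real.sqrt d := by
    rw [show (1:ℝ) = Real.sqrt 1 by simp]
    exact Real.sqrt_le_sqrt (by exact_mod_cast hd0)
  obtain ⟨g, hgw, hgle, hg2⟩ := exists_dual p hw
  have hpw : 0 < pnorm p w := pnorm_pos p hw
  have hg0 : g ≠ 0 := by
    intro h
    rw [h] at hgw
    simp at hgw
    exact hpw.ne (by rw [← hgw])
  refine ⟨g, hg0, hgw, hgle, ?_⟩
  have hng : 0 < pnorm 2 g := pnorm_pos 2 hg0
  have hnw : 0 < pnorm 2 w := pnorm_pos 2 hw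
  have hcos : 1 / Real.sqrt d ≤ Real.cos (angle (toE g) (toE w)) := by
    rw [cos_angle, inner_toE, hgw, ← pnorm_two_toE, ← pnorm_two_toE]
    rw [div_le_div_iff₀ hd (by positivity)]
    linarith [hg2]
  have h1d : 1/Real.sqrt d ≤ 1 := by
    rw [div_le_one hd]; exact hd1
  have hsin : Real.sin (1/Real.sqrt d) < 1/Real.sqrt d := Real.sin_lt (by positivity)
  by_contra hcon
  push_neg at hcon
  have hge0 : 0 ≤ Real.pi/2 - 1/Real.sqrt d := by
    have := Real.pi_gt_three
    linarith
  have hc2 := Real.cos_le_cos_of_nonneg_of_le_pi hge0 (angle_le_pi _ _) hcon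
  rw [Real.cos_pi_div_two_sub] at hc2
  linarith

lemma grow (p : ℝ≥0∞) [Fact (1 ≤ p)] {w v : Fin d → ℝ} (hw : w ≠ 0) (hv : v ≠ 0)
    (hangle : angle (toE w) (toE v) ≤ 1 / Real.sqrt d) (ε : ℝ) (hε : 0 ≤ ε) :
    pnorm p w ≤ pnorm p (w + ε • v) := by
  obtain ⟨g, hg0, hgw, hgle, hβ⟩ := dual_angle p hw
  have htri := my_angle_triangle (toE g) (toE w) (toE v) (toE_ne_zero hg0)
    (toE_ne_zero hw) (toE_ne_zero hv)
  have hlt : angle (toE g) (toE v) < Real.pi/2 := by linarith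
  have hinner := inner_pos_of_angle_lt _ _ (toE_ne_zero hg0) (toE_ne_zero hv) hlt
  rw [inner_toE] at hinner
  have hexp : ∑ i, g i * (w + ε • v) i = ∑ i, g i * w i + ε * ∑ i, g i * v i := by
    rw [Finset.mul_sum]
    rw [← Finset.sum_add_distrib]
    refine Finset.sum_congr rfl fun i _ => ?_
    simp only [Pi.add_apply, Pi.smul_apply, smul_eq_mul]
    ring
  calc pnorm p w = ∑ i, g i * w i := hgw.symm
    _ ≤ ∑ i, g i * w i + ε * ∑ i, g i * v i := by nlinarith [mul_nonneg hε hinner.le]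
    _ = ∑ i, g i * (w + ε • v) i := hexp.symm
    _ ≤ pnorm p (w + ε • v) := hgle _

theorem cone_containment {d : ℕ} (p : ℝ≥0∞) [Fact (1 ≤ p)]
    (x v : Fin d → ℝ) (hv : pnorm 2 v = 1) :
    (∀ z : Fin d → ℝ, z ≠ x → pangle (z - x) v ≤ 1 / Real.sqrt d → z ∈ Hp p x v) ∧
    (∀ z : Fin d → ℝ, z ≠ x → z ∈ Hp p x v → pangle (z - x) v ≤ Real.pi - 1 / Real.sqrt d) := by
  have hv0 : v ≠ 0 := by
    intro h
    rw [h] at hv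
    have : pnorm 2 (0 : Fin d → ℝ) = 0 := by
      rw [pnorm_two_toE]
      have : toE (0 : Fin d → ℝ) = 0 := by simp [toE]
      rw [this, norm_zero]
    rw [this] at hv
    norm_num at hv
  constructor
  · intro z hz hang
    set w := z - x with hwdef
    have hw : w ≠ 0 := sub_ne_zero.2 hz
    intro ε hε
    have h1 : x - z = -w := by rw [hwdef]; abel
    have h2 : x - ε • v - z = -(w + ε • v) := by rw [hwdef]; module
    rw [h1, h2, pnorm_neg, pnorm_neg]
    have hang' : angle (toE w) (toE v) ≤ 1 / Real.sqrt d := by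
      rw [← pangle_eq_angle]; exact hang
    exact grow p hw hv0 hang' ε hε.le
  · intro z hz hmem
    set w := z - x with hwdef
    have hw : w ≠ 0 := sub_ne_zero.2 hz
    rw [pangle_eq_angle]
    by_contra hcon
    push_neg at hcon
    set α := angle (toE w) (toE v) with hαdef
    set δ := 1/Real.sqrt d - (Real.pi - α) with hδdef
    have hδ : 0 < δ := by rw [hδdef]; linarith
    -- find a suitable small ε
    obtain ⟨ε, hε, hne, hsmall⟩ :
        ∃ ε : ℝ, 0 < ε ∧ w + ε • v ≠ 0 ∧ angle (toE (w + ε • v)) (toE w) < δ := by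
      have h1' : ContinuousAt (fun t : ℝ => ((toE w + t • toE v, toE w) :
          EuclideanSpace ℝ (Fin d) × EuclideanSpace ℝ (Fin d))) 0 :=
        ((continuous_const.add (continuous_id.smul continuous_const)).prodMk
          continuous_const).continuousAt
      have hcomp := ContinuousAt.comp
        (g := fun y : EuclideanSpace ℝ (Fin d) × EuclideanSpace ℝ (Fin d) => angle y.1 y.2)
        (f := fun t : ℝ => ((toE w + t • toE v, toE w) :
          EuclideanSpace ℝ (Fin d) × EuclideanSpace ℝ (Fin d)))
        (x := (0:ℝ))
        (continuousAt_angle (x := ((toE w + (0:ℝ) • toE v), toE w))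
          (by simpa using toE_ne_zero hw) (toE_ne_zero hw)) h1'
      have hcont : ContinuousAt (fun t : ℝ =>
          angle (toE w + t • toE v) (toE w)) 0 := hcomp
      have hval : angle (toE w + (0:ℝ) • toE v) (toE w) = 0 := by
        simp [angle_self (toE_ne_zero hw)]
      have hev1 : ∀ᶠ t in nhds (0:ℝ), angle (toE w + t • toE v) (toE w) < δ := by
        have ht := hcont.tendsto
        rw [hval] at ht
        exact ht.eventually_lt_const hδ
      have hev2 : ∀ᶠ t in nhds (0:ℝ), w + t • v ≠ 0 := by
        have hc : ContinuousAt (fun t : ℝ => w + t • v) 0 := by fun_prop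
        exact hc.eventually_ne (by simpa using hw)
      rcases Metric.eventually_nhds_iff.1 (hev1.and hev2) with ⟨ρ, hρ, hball⟩
      refine ⟨ρ/2, by positivity, ?_, ?_⟩
      · exact (hball (by rw [Real.dist_eq]; rw [sub_zero]; rw [abs_of_pos (by positivity)]; linarith)).2
      · exact (hball (by rw [Real.dist_eq]; rw [sub_zero]; rw [abs_of_pos (by positivity)]; linarith)).1
    obtain ⟨g, hg0, hgw', hgle, hβ⟩ := dual_angle p hne
    have hu : angle (toE w) (-(toE v)) = Real.pi - α := by
      rw [angle_neg_right]
    have t1 := my_angle_triangle (toE g) (toE (w + ε • v)) (toE w)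
      (toE_ne_zero hg0) (toE_ne_zero hne) (toE_ne_zero hw)
    have t2 := my_angle_triangle (toE g) (toE w) (-(toE v))
      (toE_ne_zero hg0) (toE_ne_zero hw) (neg_ne_zero.2 (toE_ne_zero hv0))
    have hαpi : α ≤ Real.pi := angle_le_pi _ _
    have hlt : angle (toE g) (-(toE v)) < Real.pi/2 := by
      rw [hδdef] at hsmall
      linarith
    have hip := inner_pos_of_angle_lt _ _ (toE_ne_zero hg0)
      (neg_ne_zero.2 (toE_ne_zero hv0)) hlt
    rw [inner_neg_right, inner_toE] at hip
    have hneg : ∑ i, g i * v i < 0 := by linarith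
    have hexp : ∑ i, g i * w i = ∑ i, g i * (w + ε • v) i - ε * ∑ i, g i * v i := by
      rw [Finset.mul_sum, ← Finset.sum_sub_distrib]
      refine Finset.sum_congr rfl fun i _ => ?_
      simp only [Pi.add_apply, Pi.smul_apply, smul_eq_mul]
      ring
    have hdec : pnorm p (w + ε • v) < pnorm p w := by
      have hle := hgle w
      have hmul : 0 < -(ε * ∑ i, g i * v i) := by nlinarith
      calc pnorm p (w + ε • v) = ∑ i, g i * (w + ε • v) i := hgw'.symm
        _ < ∑ i, g i * (w + ε • v) i - ε * ∑ i, g i * v i := by linarith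
        _ = ∑ i, g i * w i := hexp.symm
        _ ≤ pnorm p w := hle
    have hHp := hmem ε hε
    have h1 : x - z = -w := by rw [hwdef]; abel
    have h2 : x - ε • v - z = -(w + ε • v) := by rw [hwdef]; module
    rw [h1, h2, pnorm_neg, pnorm_neg] at hHp
    linarith
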